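/- Let r ≥ 1 and let Λ₁, …, Λ_r be groups such that, for each i: (a) no finite index subgroup of Λ_i is abelian, and (b) the centralizer in Λ_i of every nontrivial element of Λ_i is abelian. Let P = Λ₁ × ⋯ × Λ_r and let H₁, H₂ ≤ P be subgroups such that every element of H₁ commutes with every element of H₂ and the subgroup generated by H₁ ∪ H₂ has finite index in P. Then for every index i, at least one of the projections p_i(H₁), p_i(H₂) to the factor Λ_i is the trivial subgroup. (Splitting step in the proof of Lemma 5.3; for limit groups, hypotheses (a) and (b) hold since centralizers of nontrivial elements are infinite cyclic.) -/
import Mathlib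

lemma closure_comm {G : Type*} [Group G] (S : Set G)
    (h : ∀ a ∈ S, ∀ b ∈ S, a * b = b * a) :
    ∀ a ∈ Subgroup.closure S, ∀ b ∈ Subgroup.closure S, a * b = b * a := by
  have hc : Subgroup.closure S ≤ Subgroup.centralizer S :=
    (Subgroup.closure_le _).2 (fun s hs => Subgroup.mem_centralizer_iff.2
      (fun g hg => h g hg s hs))
  intro a ha b hb
  have hb' : ∀ g ∈ S, g * b = b * g := Subgroup.mem_centralizer_iff.1 (hc hb)
  have : Subgroup.closure S ≤ Subgroup.centralizer {b} :=
    (Subgroup.closure_le _).2 (fun s hs => Subgroup.mem_centralizer_iff.2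
      (by simpa using (hb' s hs).symm))
  have := Subgroup.mem_centralizer_iff.1 (this ha) b rfl
  simpa using this.symm

/-- Splitting step in the proof of Lemma 5.3: let `Λ₁, …, Λ_r` be groups with no abelian
finite index subgroups in which centralizers of nontrivial elements are abelian. If
`H₁, H₂ ≤ Λ₁ × ⋯ × Λ_r` commute elementwise and together generate a finite index
subgroup, then for every `i` at least one of the projections `p_i(H₁)`, `p_i(H₂)`
is trivial. -/
theorem stmt_14 {r : ℕ} (hr : 1 ≤ r) (Λ : Fin r → Type*) [∀ i, Group (Λ i)]
    (ha : ∀ i, ∀ K : Subgroup (Λ i), K.index ≠ 0 →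
      ¬ (∀ a ∈ K, ∀ b ∈ K, a * b = b * a))
    (hb : ∀ i, ∀ x : Λ i, x ≠ 1 →
      ∀ a ∈ Subgroup.centralizer {x}, ∀ b ∈ Subgroup.centralizer {x}, a * b = b * a)
    (H₁ H₂ : Subgroup (∀ i, Λ i))
    (hcomm : ∀ a ∈ H₁, ∀ b ∈ H₂, a * b = b * a)
    (hidx : (H₁ ⊔ H₂).index ≠ 0) :
    ∀ i, Subgroup.map (Pi.evalMonoidHom Λ i) H₁ = ⊥ ∨
      Subgroup.map (Pi.evalMonoidHom Λ i) H₂ = ⊥ := by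
  intro i
  by_contra hcon
  push_neg at hcon
  obtain ⟨h1, h2⟩ := hcon
  set f := Pi.evalMonoidHom Λ i with hf
  set A := Subgroup.map f H₁ with hA
  set B := Subgroup.map f H₂ with hB
  -- find nontrivial elements
  obtain ⟨⟨x, hxA⟩, hx1⟩ := (Subgroup.ne_bot_iff_exists_ne_one (H := A)).1 h1
  obtain ⟨⟨y, hyB⟩, hy1⟩ := (Subgroup.ne_bot_iff_exists_ne_one (H := B)).1 h2
  simp only [ne_eq, Subgroup.mk_eq_one] at hx1 hy1
  -- cross commuting
  have cross : ∀ a ∈ A, ∀ b ∈ B, a * b = b * a := by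
    rintro a ⟨a', ha', rfl⟩ b ⟨b', hb', rfl⟩
    have := hcomm a' ha' b' hb'
    calc f a' * f b' = f (a' * b') := (map_mul f a' b').symm
      _ = f (b' * a') := by rw [this]
      _ = f b' * f a' := map_mul f b' a'
  -- A ≤ centralizer {y}, B ≤ centralizer {x}
  have hAc : ∀ a ∈ A, ∀ b ∈ A, a * b = b * a := by
    intro a haA b hbA
    exact hb i y hy1
      a (Subgroup.mem_centralizer_iff.2 (by
        intro g hg; simp only [Set.mem_singleton_iff] at hg; subst hg
        exact (cross a haA _ hyB).symm))
      b (Subgroup.mem_centralizer_iff.2 (by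
        intro g hg; simp only [Set.mem_singleton_iff] at hg; subst hg
        exact (cross b hbA _ hyB).symm))
  have hBc : ∀ a ∈ B, ∀ b ∈ B, a * b = b * a := by
    intro a haB b hbB
    exact hb i x hx1
      a (Subgroup.mem_centralizer_iff.2 (by
        intro g hg; simp only [Set.mem_singleton_iff] at hg; subst hg
        exact cross _ hxA a haB))
      b (Subgroup.mem_centralizer_iff.2 (by
        intro g hg; simp only [Set.mem_singleton_iff] at hg; subst hg
        exact cross _ hxA b hbB))
  -- the sup is abelian
  have hS : ∀ a ∈ (A : Set (Λ i)) ∪ B, ∀ b ∈ (A : Set (Λ i)) ∪ B, a * b = b * a := by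
    rintro a (haA | haB) b (hbA | hbB)
    · exact hAc a haA b hbA
    · exact cross a haA b hbB
    · exact (cross b hbA a haB).symm
    · exact hBc a haB b hbB
  have hsup : A ⊔ B = Subgroup.closure ((A : Set (Λ i)) ∪ B) := by
    rw [Subgroup.closure_union, Subgroup.closure_eq, Subgroup.closure_eq]
  have habelian : ∀ a ∈ A ⊔ B, ∀ b ∈ A ⊔ B, a * b = b * a := by
    rw [hsup]; exact closure_comm _ hS
  -- index of A ⊔ B is nonzero
  have hsurj : Function.Surjective f := Function.surjective_eval i
  have hmap : A ⊔ B = Subgroup.map f (H₁ ⊔ H₂) := (Subgroup.map_sup _ _ _).symm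
  have hdvd := Subgroup.index_map_dvd (H := H₁ ⊔ H₂) hsurj
  have hidx' : (A ⊔ B).index ≠ 0 := by
    rw [hmap]
    exact fun h0 => hidx (Nat.eq_zero_of_zero_dvd (h0 ▸ hdvd))
  exact ha i (A ⊔ B) hidx' habelian
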